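/- arXiv:2004.06908 — 2 statements merged into one kernel-verified Lean document; each statement's English description precedes it below -/
import Mathlib

section
/- Let n ≥ 1, let 1 ≤ l ≤ k ≤ n be integers, and let a = (a_1,…,a_n) ∈ ℝⁿ with a_i > 0 for all i. Then for every index 1 ≤ i ≤ n: σ_l(a) · σ_{k−1;i}(a) ≥ σ_{l−1;i}(a) · σ_k(a). -/
open scoped BigOperators
open Filter MeasureTheory Set

noncomputable section

/-- Euclidean `n`-space `ℝⁿ`. -/
abbrev En (n : ℕ) : Type := EuclideanSpace ℝ (Fin n)

/-- `σ_k(a)`: the `k`-th elementary symmetric polynomial of `a : Fin n → ℝ`. -/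
def esym (n k : ℕ) (a : Fin n → ℝ) : ℝ :=
  ∑ t ∈ Finset.powersetCard k (Finset.univ : Finset (Fin n)), ∏ i ∈ t, a i

/-- `σ_{k;i}(a) := σ_k(a)|_{a_i = 0}`. -/
def esymDel (n k : ℕ) (a : Fin n → ℝ) (i : Fin n) : ℝ :=
  esym n k (Function.update a i 0)

/-- `H_k(a) = max_{1 ≤ i ≤ n} σ_{k-1;i}(a) a_i / σ_k(a)`. -/
def Hfun (n k : ℕ) (a : Fin n → ℝ) : ℝ :=
  ⨆ i : Fin n, esymDel n (k - 1) a i * a i / esym n k a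

/-- `h_l(a) = min_{1 ≤ i ≤ n} σ_{l-1;i}(a) a_i / σ_l(a)`, with `h_0 = 0`. -/
def hfun (n l : ℕ) (a : Fin n → ℝ) : ℝ :=
  if l = 0 then 0 else ⨅ i : Fin n, esymDel n (l - 1) a i * a i / esym n l a

/-- The Hessian matrix `D²u(x)` of a function `u : ℝⁿ → ℝ`. -/
def hess {n : ℕ} (u : En n → ℝ) (x : En n) : Matrix (Fin n) (Fin n) ℝ :=
  Matrix.of fun i j =>
    fderiv ℝ (fun y => fderiv ℝ u y (EuclideanSpace.single j 1)) x (EuclideanSpace.single i 1)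

/-- `σ_k(λ(M))`: the `k`-th elementary symmetric function of the eigenvalues of `M`,
expressed via the coefficients of the characteristic polynomial. -/
def sigmaEig {n : ℕ} (k : ℕ) (M : Matrix (Fin n) (Fin n) ℝ) : ℝ :=
  (-1 : ℝ) ^ k * M.charpoly.coeff (n - k)

/-- The Hessian quotient operator `S_{k,l}(M) = σ_k(λ(M))/σ_l(λ(M))`. -/
def Skl {n : ℕ} (k l : ℕ) (M : Matrix (Fin n) (Fin n) ℝ) : ℝ :=
  sigmaEig k M / sigmaEig l M

/-- The Garding cone `Γ_k = {λ : σ_j(λ) > 0, 1 ≤ j ≤ k}`. -/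
def GammaCone (n k : ℕ) : Set (Fin n → ℝ) :=
  {lam | ∀ j : ℕ, 1 ≤ j → j ≤ k → 0 < esym n j lam}

/-- `ψ` is `k`-convex at `x`: the (symmetric) Hessian has eigenvalue vector in `closure Γ_k`. -/
def KConvexAt (n k : ℕ) (ψ : En n → ℝ) (x : En n) : Prop :=
  ∃ hsym : (hess ψ x).IsHermitian, hsym.eigenvalues ∈ closure (GammaCone n k)

/-- Viscosity subsolution of `S_{k,l}(D²u) = 1` on `Ω`. -/
def ViscSubOn (n k l : ℕ) (Ω : Set (En n)) (u : En n → ℝ) : Prop :=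
  UpperSemicontinuousOn u Ω ∧
  ∀ ψ : En n → ℝ, ContDiffOn ℝ 2 ψ Ω → (∀ x ∈ Ω, KConvexAt n k ψ x) →
    ∀ x₀ ∈ Ω, ψ x₀ = u x₀ → (∀ x ∈ Ω, u x ≤ ψ x) → 1 ≤ Skl k l (hess ψ x₀)

/-- Viscosity supersolution of `S_{k,l}(D²u) = 1` on `Ω`. -/
def ViscSupOn (n k l : ℕ) (Ω : Set (En n)) (u : En n → ℝ) : Prop :=
  LowerSemicontinuousOn u Ω ∧
  ∀ ψ : En n → ℝ, ContDiffOn ℝ 2 ψ Ω → (∀ x ∈ Ω, KConvexAt n k ψ x) →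
    ∀ x₀ ∈ Ω, ψ x₀ = u x₀ → (∀ x ∈ Ω, ψ x ≤ u x) → Skl k l (hess ψ x₀) ≤ 1

/-- Viscosity solution of the exterior Dirichlet problem
`S_{k,l}(D²u) = 1` in `ℝⁿ ∖ D̄`, `u = φ` on `∂D`, `u ∈ C⁰(ℝⁿ ∖ D)`. -/
def ExtViscSolution (n k l : ℕ) (D : Set (En n)) (φ u : En n → ℝ) : Prop :=
  ContinuousOn u Dᶜ ∧
  ViscSubOn n k l (closure D)ᶜ u ∧
  ViscSupOn n k l (closure D)ᶜ u ∧
  ∀ x ∈ frontier D, u x = φ x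

/-- A smooth, bounded, strictly convex open set. -/
structure SmoothStrictlyConvexDomain (n : ℕ) (D : Set (En n)) : Prop where
  isOpen : IsOpen D
  nonempty : D.Nonempty
  bounded : Bornology.IsBounded D
  strictConvex : StrictConvex ℝ D
  smoothBoundary : ∃ f : En n → ℝ, ContDiff ℝ (⊤ : ℕ∞) f ∧ D = {x | f x < 0} ∧
    ∀ x ∈ frontier D, fderiv ℝ f x ≠ 0

/-- `½ xᵀ A x`. -/
def quadForm {n : ℕ} (A : Matrix (Fin n) (Fin n) ℝ) (x : En n) : ℝ :=
  (1 / 2) * ∑ i, ∑ j, A i j * x i * x j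

/-- `s(x) = ½ ∑ a_i x_i²` (i.e. `½ xᵀAx` for `A = diag a`). -/
def sdiag {n : ℕ} (a : Fin n → ℝ) (x : En n) : ℝ :=
  (1 / 2) * ∑ i, a i * x i ^ 2

end

namespace SigmaAux

variable {ι : Type*} [DecidableEq ι]

/-- elementary symmetric sum over a finset -/
def E (f : ι → ℝ) (s : Finset ι) (j : ℕ) : ℝ :=
  ∑ t ∈ Finset.powersetCard j s, ∏ i ∈ t, f i

lemma E_zero (f : ι → ℝ) (s : Finset ι) : E f s 0 = 1 := by
  simp [E]

lemma E_nonneg {f : ι → ℝ} {s : Finset ι} (hf : ∀ i ∈ s, 0 ≤ f i) (j : ℕ) :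
    0 ≤ E f s j := by
  refine Finset.sum_nonneg fun t ht => Finset.prod_nonneg fun i hi => ?_
  exact hf i ((Finset.mem_powersetCard.mp ht).1 hi)

lemma E_insert {f : ι → ℝ} {s : Finset ι} {x : ι} (hx : x ∉ s) (j : ℕ) :
    E f (insert x s) (j + 1) = E f s (j + 1) + f x * E f s j := by
  unfold E
  rw [Finset.powersetCard_succ_insert hx, Finset.sum_union, Finset.sum_image, Finset.mul_sum]
  · congr 1
    refine Finset.sum_congr rfl fun t ht => ?_
    have hxt : x ∉ t := fun h => hx ((Finset.mem_powersetCard.mp ht).1 h)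
    rw [Finset.prod_insert hxt]
  · intro t ht t' ht' h
    have hxt : x ∉ t := fun h => hx ((Finset.mem_powersetCard.mp ht).1 h)
    have hxt' : x ∉ t' := fun h => hx ((Finset.mem_powersetCard.mp ht').1 h)
    rw [← Finset.erase_insert hxt, ← Finset.erase_insert hxt', h]
  · rw [Finset.disjoint_left]
    intro t ht ht'
    obtain ⟨u, hu, rfl⟩ := Finset.mem_image.mp ht'
    exact hx ((Finset.mem_powersetCard.mp ht).1 (Finset.mem_insert_self x u))

lemma E_erase_of_zero {f : ι → ℝ} {s : Finset ι} {x : ι} (hx : x ∈ s) (hfx : f x = 0)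
    (j : ℕ) : E f s j = E f (s.erase x) j := by
  have hs : s = insert x (s.erase x) := (Finset.insert_erase hx).symm
  cases j with
  | zero => rw [E_zero, E_zero]
  | succ j =>
    rw [hs, E_insert (Finset.notMem_erase x s), hfx, zero_mul, add_zero,
      Finset.erase_insert (Finset.notMem_erase x s)]

lemma E_congr {f g : ι → ℝ} {s : Finset ι} (h : ∀ i ∈ s, f i = g i) (j : ℕ) :
    E f s j = E g s j := by
  refine Finset.sum_congr rfl fun t ht => Finset.prod_congr rfl fun i hi => ?_
  exact h i ((Finset.mem_powersetCard.mp ht).1 hi)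

/-- log-concavity / Newton-type: E_l E_{k+1} ≤ E_{l+1} E_k for l ≤ k, nonneg f. -/
lemma E_log_concave {f : ι → ℝ} {s : Finset ι} (hf : ∀ i ∈ s, 0 ≤ f i) :
    ∀ l k : ℕ, l ≤ k → E f s l * E f s (k + 1) ≤ E f s (l + 1) * E f s k := by
  induction s using Finset.induction_on with
  | empty =>
    intro l k hlk
    have h1 : E f (∅ : Finset ι) (k + 1) = 0 := by
      rw [E, Finset.powersetCard_eq_empty.mpr (by simp), Finset.sum_empty]
    rw [h1, mul_zero]
    exact mul_nonneg (E_nonneg (by simp) _) (E_nonneg (by simp) _)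
  | insert x s hx ih =>
    intro l k hlk
    have hfx : 0 ≤ f x := hf x (Finset.mem_insert_self x s)
    have hfs : ∀ i ∈ s, 0 ≤ f i := fun i hi => hf i (Finset.mem_insert_of_mem hi)
    have ih' := ih hfs
    rcases eq_or_lt_of_le hlk with rfl | hlt
    · rw [mul_comm]
    · -- l < k, so k = p + 1
      obtain ⟨p, rfl⟩ : ∃ p, k = p + 1 := ⟨k - 1, by omega⟩
      have hlp : l ≤ p := by omega
      have hN : ∀ j, 0 ≤ E f s j := E_nonneg hfs
      cases l with
      | zero =>
        have h1 : E f s (p + 1 + 1) ≤ E f s (0 + 1) * E f s (p + 1) := by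
          have := ih' 0 (p + 1) (by omega)
          rwa [E_zero, one_mul] at this
        rw [E_zero, one_mul, E_insert hx, E_insert hx, E_insert hx, E_zero]
        nlinarith [mul_nonneg (mul_nonneg hfx (hN (0+1))) (hN p),
          mul_nonneg (mul_nonneg hfx hfx) (hN p), hfx, hN p, hN (p+1)]
      | succ m =>
        have hmp : m ≤ p := by omega
        rw [E_insert hx, E_insert hx, E_insert hx, E_insert hx]
        have h1 := ih' (m + 1) (p + 1) (by omega)
        have h2 := ih' m p hmp
        have h3 := ih' m (p + 1) (by omega)
        have h4 := ih' (m + 1) p (by omega)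
        nlinarith [hN m, hN (m+1), hN (m+2), hN p, hN (p+1), hN (p+2), hfx,
          mul_nonneg hfx hfx]

end SigmaAux

/-- Newton-type inequality (2.3): `σ_l(a) σ_{k−1;i}(a) ≥ σ_{l−1;i}(a) σ_k(a)`. -/
theorem sigma_quotient_inequality
    (n : ℕ) (hn : 1 ≤ n) (k l : ℕ) (hl1 : 1 ≤ l) (hlk : l ≤ k) (hkn : k ≤ n)
    (a : Fin n → ℝ) (ha : ∀ i, 0 < a i) (i : Fin n) :
    esymDel n (l - 1) a i * esym n k a ≤ esym n l a * esymDel n (k - 1) a i := by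
  obtain ⟨l', rfl⟩ : ∃ l', l = l' + 1 := ⟨l - 1, by omega⟩
  obtain ⟨k', rfl⟩ : ∃ k', k = k' + 1 := ⟨k - 1, by omega⟩
  set s := (Finset.univ : Finset (Fin n)).erase i with hs
  have hins : (Finset.univ : Finset (Fin n)) = insert i s :=
    (Finset.insert_erase (Finset.mem_univ i)).symm
  have hisn : i ∉ s := Finset.notMem_erase i _
  have hdel : ∀ j, esymDel n j a i = SigmaAux.E a s j := by
    intro j
    have h0 : esymDel n j a i = SigmaAux.E (Function.update a i 0) Finset.univ j := rfl
    rw [h0, SigmaAux.E_erase_of_zero (Finset.mem_univ i) (Function.update_self i 0 a) j]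
    exact SigmaAux.E_congr
      (fun x hx => Function.update_of_ne (Finset.ne_of_mem_erase hx) 0 a) j
  have hesym : ∀ j, esym n j a = SigmaAux.E a Finset.univ j := fun j => rfl
  have hsimp1 : l' + 1 - 1 = l' := rfl
  have hsimp2 : k' + 1 - 1 = k' := rfl
  rw [hsimp1, hsimp2, hdel, hdel, hesym, hesym, hins,
    SigmaAux.E_insert hisn, SigmaAux.E_insert hisn]
  have hlc := SigmaAux.E_log_concave (f := a) (s := s)
    (fun x _ => (ha x).le) l' k' (by omega)
  nlinarith [hlc, mul_nonneg (mul_nonneg (ha i).le (SigmaAux.E_nonneg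
    (f := a) (s := s) (fun x _ => (ha x).le) l')) (SigmaAux.E_nonneg
    (f := a) (s := s) (fun x _ => (ha x).le) k')]
end

section
/- Let n ≥ 1 and let a = (a_1,…,a_n) ∈ ℝⁿ with 0 < a_1 ≤ a_2 ≤ ⋯ ≤ a_n. Then for all integers 1 ≤ k ≤ n: max_{1≤i≤n} σ_{k−1;i}(a) a_i = σ_{k−1;n}(a) a_n and min_{1≤i≤n} σ_{k−1;i}(a) a_i = σ_{k−1;1}(a) a_1; that is, H_k(a) = σ_{k−1;n}(a) a_n / σ_k(a) and h_k(a) = σ_{k−1;1}(a) a_1 / σ_k(a). Moreover, for 1 ≤ m ≤ k ≤ n, σ_{m−1;n}(a) a_n / σ_m(a) ≤ σ_{k−1;n}(a) a_n / σ_k(a), i.e. H_m(a) ≤ H_k(a). -/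
open scoped BigOperators
open Filter MeasureTheory Set

namespace HkAux

open Finset

variable {n : ℕ}

/-- Partial elementary symmetric polynomial over a finset of indices. -/
noncomputable def E (a : Fin n → ℝ) (s : Finset (Fin n)) (k : ℕ) : ℝ :=
  ∑ t ∈ s.powersetCard k, ∏ i ∈ t, a i

lemma E_zero (a : Fin n → ℝ) (s : Finset (Fin n)) : E a s 0 = 1 := by
  simp [E, Finset.powersetCard_zero]

lemma E_nonneg {a : Fin n → ℝ} (ha : ∀ i, 0 ≤ a i) (s : Finset (Fin n)) (k : ℕ) :
    0 ≤ E a s k :=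
  Finset.sum_nonneg fun t _ => Finset.prod_nonneg fun i _ => ha i

lemma E_pos {a : Fin n → ℝ} (ha : ∀ i, 0 < a i) (s : Finset (Fin n)) {k : ℕ}
    (hk : k ≤ s.card) : 0 < E a s k := by
  obtain ⟨t, hts, htc⟩ := Finset.exists_subset_card_eq hk
  refine Finset.sum_pos' (fun u _ => Finset.prod_nonneg fun i _ => (ha i).le)
    ⟨t, Finset.mem_powersetCard.2 ⟨hts, htc⟩, Finset.prod_pos fun i _ => ha i⟩

lemma E_insert {a : Fin n → ℝ} {x : Fin n} {s : Finset (Fin n)} (hx : x ∉ s) (k : ℕ) :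
    E a (insert x s) (k + 1) = E a s (k + 1) + a x * E a s k := by
  have hdisj : Disjoint (s.powersetCard (k + 1)) ((s.powersetCard k).image (insert x)) := by
    refine Finset.disjoint_left.2 fun t ht hti => ?_
    obtain ⟨u, hu, rfl⟩ := Finset.mem_image.1 hti
    exact hx ((Finset.mem_powersetCard.1 ht).1 (Finset.mem_insert_self x u))
  rw [E, Finset.powersetCard_succ_insert hx, Finset.sum_union hdisj]
  congr 1
  rw [Finset.sum_image ?hi]
  · rw [E, Finset.mul_sum]
    refine Finset.sum_congr rfl fun t ht => ?_
    have hxt : x ∉ t := fun hc => hx ((Finset.mem_powersetCard.1 ht).1 hc)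
    rw [Finset.prod_insert hxt]
  case hi =>
    intro t ht u hu htu
    have hxt : x ∉ t := fun hc => hx ((Finset.mem_powersetCard.1 ht).1 hc)
    have hxu : x ∉ u := fun hc => hx ((Finset.mem_powersetCard.1 hu).1 hc)
    rw [← Finset.erase_insert hxt, ← Finset.erase_insert hxu, htu]

/-- Newton-type log-concavity of the elementary symmetric polynomials (cross version). -/
lemma E_newton {a : Fin n → ℝ} (ha : ∀ i, 0 ≤ a i) (s : Finset (Fin n)) :
    ∀ p q : ℕ, p ≤ q → E a s p * E a s (q + 1) ≤ E a s (p + 1) * E a s q := by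
  induction s using Finset.induction_on with
  | empty =>
    intro p q _
    have h0 : E a (∅ : Finset (Fin n)) (q + 1) = 0 := by
      rw [E, Finset.powersetCard_eq_empty.2 (by simp)]; simp
    rw [h0, mul_zero]
    exact mul_nonneg (E_nonneg ha _ _) (E_nonneg ha _ _)
  | @insert x s hx ih =>
    intro p q hpq
    have ht : 0 ≤ a x := ha x
    have hE : ∀ j, 0 ≤ E a s j := E_nonneg ha s
    match p, q, hpq with
    | 0, 0, _ => simp [E_zero]
    | 0, q + 1, _ =>
      rw [E_zero, one_mul, E_insert hx, E_insert hx, E_insert hx, E_zero, mul_one]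
      have h1 : E a s (q + 2) ≤ E a s 1 * E a s (q + 1) := by
        have := ih 0 (q + 1) (by omega)
        rwa [E_zero, one_mul] at this
      nlinarith [mul_nonneg ht (hE q), mul_nonneg (mul_nonneg ht ht) (hE q),
        mul_nonneg ht (mul_nonneg (hE 1) (hE q))]
    | p + 1, q + 1, hpq' =>
      have hpq2 : p ≤ q := by omega
      rw [E_insert hx, E_insert hx, E_insert hx, E_insert hx]
      have h1 := ih (p + 1) (q + 1) (by omega)
      have h2 := ih p q hpq2
      have h3 : E a s p * E a s (q + 2) ≤ E a s (p + 2) * E a s q := by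
        rcases eq_or_lt_of_le hpq2 with rfl | hlt
        · exact le_of_eq (mul_comm _ _)
        · calc E a s p * E a s (q + 2) ≤ E a s (p + 1) * E a s (q + 1) :=
                ih p (q + 1) (by omega)
            _ ≤ E a s (p + 2) * E a s q := ih (p + 1) q (by omega)
      nlinarith [mul_le_mul_of_nonneg_left h3 ht,
        mul_le_mul_of_nonneg_left h2 (mul_nonneg ht ht)]

lemma E_congr {a b : Fin n → ℝ} {s : Finset (Fin n)} (h : ∀ i ∈ s, a i = b i) (k : ℕ) :
    E a s k = E b s k := by
  refine Finset.sum_congr rfl fun t ht => Finset.prod_congr rfl fun i hi => ?_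
  exact h i ((Finset.mem_powersetCard.1 ht).1 hi)

lemma esym_eq (a : Fin n → ℝ) (k : ℕ) : esym n k a = E a Finset.univ k := rfl

lemma esymDel_eq (a : Fin n → ℝ) (i : Fin n) (k : ℕ) :
    esymDel n k a i = E a (Finset.univ.erase i) k := by
  have hins : insert i (Finset.univ.erase i) = Finset.univ :=
    Finset.insert_erase (Finset.mem_univ i)
  have hni : i ∉ Finset.univ.erase i := Finset.notMem_erase i _
  have hupd : ∀ j, E (Function.update a i 0) (Finset.univ.erase i) j
      = E a (Finset.univ.erase i) j := fun j =>
    E_congr (fun x hx => Function.update_of_ne (Finset.ne_of_mem_erase hx) _ _) j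
  cases k with
  | zero => show E (Function.update a i 0) Finset.univ 0 = _; rw [E_zero, E_zero]
  | succ k =>
    have h := E_insert (a := Function.update a i 0) hni k
    rw [hins] at h
    show E (Function.update a i 0) Finset.univ (k + 1) = _
    rw [h, Function.update_self, zero_mul, add_zero, hupd]

lemma esym_decomp (a : Fin n → ℝ) (i : Fin n) (k : ℕ) :
    esym n (k + 1) a = E a (Finset.univ.erase i) (k + 1)
      + a i * E a (Finset.univ.erase i) k := by
  have hins : insert i (Finset.univ.erase i) = Finset.univ :=
    Finset.insert_erase (Finset.mem_univ i)
  have hni : i ∉ Finset.univ.erase i := Finset.notMem_erase i _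
  have h := E_insert (a := a) hni k
  rw [hins] at h
  rw [esym_eq, h]

lemma E_erase_antitone {a : Fin n → ℝ} (ha : ∀ i, 0 ≤ a i) (hmono : Monotone a)
    {i j : Fin n} (hij : i ≤ j) (k : ℕ) :
    E a (Finset.univ.erase j) k ≤ E a (Finset.univ.erase i) k := by
  set e := Equiv.swap i j with he
  have hej : e j = i := Equiv.swap_apply_right i j
  have hei : e i = j := Equiv.swap_apply_left i j
  have hself : ∀ x, e (e x) = x := fun x => Equiv.swap_apply_self i j x
  have step1 : E a (Finset.univ.erase j) k
      ≤ ∑ t ∈ (Finset.univ.erase j).powersetCard k, ∏ y ∈ t, a (e y) := by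
    refine Finset.sum_le_sum fun t ht => ?_
    refine Finset.prod_le_prod (fun y _ => ha y) fun y hy => ?_
    have hyj : y ≠ j := Finset.ne_of_mem_erase ((Finset.mem_powersetCard.1 ht).1 hy)
    rcases eq_or_ne y i with rfl | hyi
    · rw [hei]; exact hmono hij
    · rw [Equiv.swap_apply_of_ne_of_ne hyi hyj]
  have step2 : ∑ t ∈ (Finset.univ.erase j).powersetCard k, ∏ y ∈ t, a (e y)
      = E a (Finset.univ.erase i) k := by
    have hprod : ∀ t : Finset (Fin n), ∏ y ∈ t, a (e y) = ∏ x ∈ t.map e.toEmbedding, a x := by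
      intro t; exact (Finset.prod_map t e.toEmbedding a).symm
    have hinj : ∀ t ∈ (Finset.univ.erase j).powersetCard k,
        ∀ u ∈ (Finset.univ.erase j).powersetCard k,
        t.map e.toEmbedding = u.map e.toEmbedding → t = u :=
      fun t _ u _ h => Finset.map_injective _ h
    have himg : ((Finset.univ.erase j).powersetCard k).image (fun t => t.map e.toEmbedding)
        = (Finset.univ.erase i).powersetCard k := by
      ext T
      simp only [Finset.mem_image, Finset.mem_powersetCard]
      constructor
      · rintro ⟨t, ⟨hts, htc⟩, rfl⟩
        refine ⟨fun x hxm => ?_, by rw [Finset.card_map, htc]⟩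
        obtain ⟨y, hy, rfl⟩ := Finset.mem_map.1 hxm
        have hyj : y ≠ j := Finset.ne_of_mem_erase (hts hy)
        refine Finset.mem_erase.2 ⟨?_, Finset.mem_univ _⟩
        intro hc
        exact hyj (e.injective (hc.trans hej.symm))
      · rintro ⟨hTs, hTc⟩
        refine ⟨T.map e.toEmbedding, ⟨fun x hxm => ?_, by rw [Finset.card_map, hTc]⟩, ?_⟩
        · obtain ⟨y, hy, rfl⟩ := Finset.mem_map.1 hxm
          have hyi : y ≠ i := Finset.ne_of_mem_erase (hTs hy)
          refine Finset.mem_erase.2 ⟨?_, Finset.mem_univ _⟩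
          intro hc
          exact hyi (e.injective (hc.trans hei.symm))
        · ext x
          simp only [Finset.mem_map, Equiv.coe_toEmbedding]
          constructor
          · rintro ⟨y, ⟨z, hz, rfl⟩, rfl⟩
            show e (e z) ∈ T
            rw [hself]
            exact hz
          · intro hx
            exact ⟨e x, ⟨x, hx, rfl⟩, hself x⟩
    calc ∑ t ∈ (Finset.univ.erase j).powersetCard k, ∏ y ∈ t, a (e y)
        = ∑ t ∈ (Finset.univ.erase j).powersetCard k, ∏ x ∈ t.map e.toEmbedding, a x := by
          exact Finset.sum_congr rfl fun t _ => hprod t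
      _ = ∑ T ∈ ((Finset.univ.erase j).powersetCard k).image (fun t => t.map e.toEmbedding),
            ∏ x ∈ T, a x := by rw [Finset.sum_image hinj]
      _ = E a (Finset.univ.erase i) k := by rw [himg]; rfl
  linarith [step1, le_of_eq step2]

lemma f_monotone {a : Fin n → ℝ} (ha : ∀ i, 0 ≤ a i) (hmono : Monotone a) (k : ℕ) :
    Monotone fun i => esymDel n k a i * a i := by
  intro i j hij
  simp only [esymDel_eq]
  have h1 := esym_decomp a i k
  have h2 := esym_decomp a j k
  have h3 := E_erase_antitone ha hmono hij (k + 1)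
  nlinarith [h1, h2, h3]

lemma ciSup_monotone (hn : 1 ≤ n) {g : Fin n → ℝ} (hg : Monotone g) :
    ⨆ i, g i = g ⟨n - 1, Nat.sub_lt hn Nat.one_pos⟩ := by
  haveI : Nonempty (Fin n) := ⟨⟨0, by omega⟩⟩
  refine le_antisymm (ciSup_le fun i => hg (Fin.le_def.mpr ?_)) (le_ciSup ?_ _)
  · have := i.isLt; simp only; omega
  · exact Set.Finite.bddAbove (Set.finite_range g)

lemma ciInf_monotone (hn : 1 ≤ n) {g : Fin n → ℝ} (hg : Monotone g) :
    ⨅ i, g i = g ⟨0, hn⟩ := by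
  haveI : Nonempty (Fin n) := ⟨⟨0, by omega⟩⟩
  refine le_antisymm (ciInf_le ?_ _) (le_ciInf fun i => hg (Fin.le_def.mpr (Nat.zero_le _)))
  exact Set.Finite.bddBelow (Set.finite_range g)

end HkAux

/-- Equation (5.2)/(A.2): for `0 < a₁ ≤ ⋯ ≤ aₙ`, the max in `H_k` is attained at the last
index, the min at the first, and `H_m ≤ H_k` for `m ≤ k`. -/
theorem Hk_attained_at_extremes
    (n : ℕ) (hn : 1 ≤ n) (a : Fin n → ℝ)
    (ha0 : 0 < a ⟨0, by omega⟩) (hmono : Monotone a) :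
    ∀ k : ℕ, 1 ≤ k → k ≤ n →
      (⨆ i : Fin n, esymDel n (k - 1) a i * a i) =
        esymDel n (k - 1) a ⟨n - 1, by omega⟩ * a ⟨n - 1, by omega⟩ ∧
      (⨅ i : Fin n, esymDel n (k - 1) a i * a i) =
        esymDel n (k - 1) a ⟨0, by omega⟩ * a ⟨0, by omega⟩ ∧
      Hfun n k a =
        esymDel n (k - 1) a ⟨n - 1, by omega⟩ * a ⟨n - 1, by omega⟩ / esym n k a ∧
      hfun n k a =
        esymDel n (k - 1) a ⟨0, by omega⟩ * a ⟨0, by omega⟩ / esym n k a ∧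
      ∀ m : ℕ, 1 ≤ m → m ≤ k →
        esymDel n (m - 1) a ⟨n - 1, by omega⟩ * a ⟨n - 1, by omega⟩ / esym n m a ≤
          esymDel n (k - 1) a ⟨n - 1, by omega⟩ * a ⟨n - 1, by omega⟩ / esym n k a := by
  classical
  have hapos : ∀ i, 0 < a i := fun i =>
    lt_of_lt_of_le ha0 (hmono (Fin.le_def.mpr (Nat.zero_le _)))
  have hann : ∀ i, (0:ℝ) ≤ a i := fun i => (hapos i).le
  have hesym_pos : ∀ j : ℕ, j ≤ n → 0 < esym n j a := by
    intro j hj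
    rw [HkAux.esym_eq]
    exact HkAux.E_pos hapos _ (by simpa using hj)
  intro k hk1 hkn
  obtain ⟨k', rfl⟩ : ∃ k', k = k' + 1 := ⟨k - 1, by omega⟩
  simp only [Nat.add_sub_cancel]
  set last : Fin n := ⟨n - 1, by omega⟩ with hlast
  set first : Fin n := ⟨0, by omega⟩ with hfirst
  have hσ : 0 < esym n (k' + 1) a := hesym_pos _ hkn
  have hfm : Monotone fun i => esymDel n k' a i * a i := HkAux.f_monotone hann hmono k'
  have hgm : Monotone fun i => esymDel n k' a i * a i / esym n (k' + 1) a := by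
    intro i j hij
    exact (div_le_div_iff_of_pos_right hσ).mpr (hfm hij)
  refine ⟨HkAux.ciSup_monotone hn hfm, HkAux.ciInf_monotone hn hfm, ?_, ?_, ?_⟩
  · rw [Hfun]
    simpa using HkAux.ciSup_monotone hn hgm
  · rw [hfun, if_neg (by omega)]
    simpa using HkAux.ciInf_monotone hn hgm
  · intro m hm1 hmk
    obtain ⟨m', rfl⟩ : ∃ m', m = m' + 1 := ⟨m - 1, by omega⟩
    simp only [Nat.add_sub_cancel]
    set s : Finset (Fin n) := Finset.univ.erase last with hs
    have hdm : esym n (m' + 1) a = HkAux.E a s (m' + 1) + a last * HkAux.E a s m' :=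
      HkAux.esym_decomp a last m'
    have hdk : esym n (k' + 1) a = HkAux.E a s (k' + 1) + a last * HkAux.E a s k' :=
      HkAux.esym_decomp a last k'
    have hσm : 0 < esym n (m' + 1) a := hesym_pos _ (by omega)
    have key : HkAux.E a s m' * HkAux.E a s (k' + 1)
        ≤ HkAux.E a s (m' + 1) * HkAux.E a s k' :=
      HkAux.E_newton hann s m' k' (by omega)
    rw [HkAux.esymDel_eq, HkAux.esymDel_eq, div_le_div_iff₀ hσm hσ, hdm, hdk]
    have ht : (0:ℝ) ≤ a last := hann last
    nlinarith [mul_le_mul_of_nonneg_left key ht]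
end
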